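/- Let k ≥ 1 and let A_0, …, A_{2k+1} be pairwise disjoint nonempty finite subsets of ℝ/ℤ. Define sign_{2k}(B_0,…,B_{2k}) := (Π_j |B_j|)^{-1} · Σ_{(b_0,…,b_{2k}) ∈ B_0×⋯×B_{2k}} sgn(b_0,…,b_{2k}) ∈ ℚ for pairwise disjoint nonempty finite subsets B_0,…,B_{2k}. Then Σ_{i=0}^{2k+1} (−1)^i · sign_{2k}(A_0, …, Â_i, …, A_{2k+1}) = 0. -/

import Mathlib

noncomputable section
open Classical

instance : Fact ((0:ℝ) < 1) := ⟨one_pos⟩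

/-- The circle `ℝ/ℤ`. -/
abbrev S1 := AddCircle (1 : ℝ)

/-- A tuple of points on the circle is in cyclic order if every increasing triple of
indices gives points in strict circular betweenness. -/
def InCyclicOrder {m : ℕ} (b : Fin m → S1) : Prop :=
  ∀ i j l : Fin m, i < j → j < l → sbtw (b i) (b j) (b l)

/-- The cyclic sign of a tuple of points on the circle: the sign of any permutation
rearranging the tuple into cyclic order (well defined for injective tuples of odd
length). -/
noncomputable def cycSgn {m : ℕ} (a : Fin m → S1) : ℤ :=
  if h : ∃ σ : Equiv.Perm (Fin m), InCyclicOrder (a ∘ σ) then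
    (Equiv.Perm.sign h.choose : ℤ)
  else 1

/-- The averaged sign `sign_{m-1}` of a tuple of pairwise disjoint nonempty finite
subsets of the circle. -/
noncomputable def avgSign {m : ℕ} (A : Fin m → Finset S1) : ℚ :=
  (∏ j : Fin m, ((A j).card : ℚ))⁻¹ *
    ∑ a ∈ Fintype.piFinset A, (cycSgn a : ℚ)

-- sbtw from real representatives
lemma sbtw_coe_of_lt {x y z : ℝ} (hxy : x < y) (hyz : y < z) (hzx : z < x + 1) :
    sbtw (x : S1) (y : S1) (z : S1) := by
  rw [sbtw_iff_btw_not_btw]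
  constructor
  · rw [QuotientAddGroup.btw_coe_iff]
    rw [(toIcoMod_eq_self _).2 ⟨hxy.le, hyz.trans hzx⟩,
      (toIocMod_eq_self _).2 ⟨hxy.trans hyz, hzx.le⟩]
    exact hyz.le
  · rw [QuotientAddGroup.btw_coe_iff]
    have h1 : toIcoMod (by norm_num : (0:ℝ) < 1) z y = y + 1 := by
      rw [toIcoMod_eq_iff]
      exact ⟨⟨by linarith, by linarith⟩, ⟨-1, by rw [zsmul_eq_mul]; push_cast; ring⟩⟩
    have h2 : toIocMod (by norm_num : (0:ℝ) < 1) z x = x + 1 := by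
      rw [toIocMod_eq_iff]
      exact ⟨⟨by linarith, by linarith⟩, ⟨-1, by rw [zsmul_eq_mul]; push_cast; ring⟩⟩
    rw [h1, h2]
    push_neg
    linarith

-- every injective tuple can be cyclically ordered
lemma exists_inCyclicOrder {m : ℕ} (a : Fin m → S1) (ha : Function.Injective a) :
    ∃ σ : Equiv.Perm (Fin m), InCyclicOrder (a ∘ σ) := by
  set r : S1 → ℝ := fun x => ((AddCircle.equivIco 1 0 x : ℝ)) with hr
  have hrinj : Function.Injective r := by
    intro x y h
    have := Subtype.ext (α := ℝ) h
    exact (AddCircle.equivIco 1 0).injective (Subtype.ext h)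
  have hmem : ∀ x : S1, r x ∈ Set.Ico (0:ℝ) (0 + 1) := fun x => (AddCircle.equivIco 1 0 x).2
  have hcoe : ∀ x : S1, ((r x : ℝ) : S1) = x := by
    intro x
    exact (AddCircle.equivIco 1 0).symm_apply_apply x
  refine ⟨Tuple.sort (r ∘ a), ?_⟩
  have hmono : StrictMono ((r ∘ a) ∘ Tuple.sort (r ∘ a)) :=
    (Tuple.monotone_sort (r ∘ a)).strictMono_of_injective
      ((hrinj.comp ha).comp (Tuple.sort (r ∘ a)).injective)
  intro i j l hij hjl
  have h1 := hmono hij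
  have h2 := hmono hjl
  have e1 := hcoe (a (Tuple.sort (r ∘ a) i))
  have e2 := hcoe (a (Tuple.sort (r ∘ a) j))
  have e3 := hcoe (a (Tuple.sort (r ∘ a) l))
  simp only [Function.comp_apply] at h1 h2 ⊢
  rw [← e1, ← e2, ← e3]
  exact sbtw_coe_of_lt h1 h2 (by
    have := (hmem (a (Tuple.sort (r ∘ a) l))).2
    have := (hmem (a (Tuple.sort (r ∘ a) i))).1
    simp only [zero_add] at *
    linarith)

-- rotation preserves cyclic order
lemma InCyclicOrder.rotate {n : ℕ} {d : Fin (n+1) → S1} (hd : InCyclicOrder d) :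
    InCyclicOrder (d ∘ finRotate (n+1)) := by
  intro i j l hij hjl
  simp only [Function.comp_apply, finRotate_succ_apply]
  rcases eq_or_lt_of_le (Fin.le_last l) with hl | hl
  · -- l = last
    have hll : l + 1 = 0 := by rw [hl]; exact Fin.last_add_one n
    have hi : i < Fin.last n := hij.trans (hjl.trans_le hl.le)
    have hj : j < Fin.last n := hjl.trans_le hl.le
    have vi := Fin.val_add_one_of_lt hi
    have vj := Fin.val_add_one_of_lt hj
    have h0i : (0 : Fin (n+1)) < i + 1 := by
      rw [Fin.lt_def, vi]; simp
    have hij1 : i + 1 < j + 1 := by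
      rw [Fin.lt_def, vi, vj]; exact Nat.succ_lt_succ hij
    rw [hll]
    exact sbtw_cyclic_left (hd 0 (i+1) (j+1) h0i hij1)
  · -- l < last
    have hi : i < Fin.last n := hij.trans (hjl.trans hl)
    have hj : j < Fin.last n := hjl.trans hl
    have vi := Fin.val_add_one_of_lt hi
    have vj := Fin.val_add_one_of_lt hj
    have vl := Fin.val_add_one_of_lt hl
    exact hd (i+1) (j+1) (l+1) (by rw [Fin.lt_def, vi, vj]; exact Nat.succ_lt_succ hij)
      (by rw [Fin.lt_def, vj, vl]; exact Nat.succ_lt_succ hjl)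

open Fin.NatCast in
lemma finRotate_pow_apply {n : ℕ} (s : ℕ) (i : Fin (n+1)) :
    ((finRotate (n+1)) ^ s) i = i + (s : Fin (n+1)) := by
  induction s with
  | zero => simp
  | succ s ih =>
    rw [pow_succ', Equiv.Perm.mul_apply, ih, finRotate_succ_apply]
    push_cast
    rw [add_assoc]

lemma InCyclicOrder.rotate_pow {n : ℕ} {d : Fin (n+1) → S1} (hd : InCyclicOrder d) (s : ℕ) :
    InCyclicOrder (d ∘ ⇑((finRotate (n+1)) ^ s)) := by
  induction s with
  | zero => simpa using hd
  | succ s ih =>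
    have h2 := InCyclicOrder.rotate ih
    have hfun : (d ∘ ⇑((finRotate (n+1)) ^ s)) ∘ ⇑(finRotate (n+1))
        = d ∘ ⇑((finRotate (n+1)) ^ (s+1)) := by
      funext x
      simp [pow_succ, Equiv.Perm.mul_apply]
    rwa [hfun] at h2

open Fin.NatCast in
lemma sign_eq_one_of_cyclic {n : ℕ} (hn : Even n) {c : Fin (n+1) → S1}
    (hc : InCyclicOrder c) (π : Equiv.Perm (Fin (n+1))) (hπ : InCyclicOrder (c ∘ π)) :
    Equiv.Perm.sign π = 1 := by
  set t : ℕ := (π⁻¹ 0).val with ht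
  set ψ : Equiv.Perm (Fin (n+1)) := π * (finRotate (n+1)) ^ t with hψ
  have hψ0 : ψ 0 = 0 := by
    rw [hψ, Equiv.Perm.mul_apply, finRotate_pow_apply, zero_add, ht, Fin.cast_val_eq_self]
    exact π.apply_symm_apply 0
  have hψcyc : InCyclicOrder (c ∘ ψ) := by
    have h2 := InCyclicOrder.rotate_pow (d := c ∘ π) hπ t
    have hfun : (c ∘ ⇑π) ∘ ⇑((finRotate (n+1)) ^ t) = c ∘ ⇑ψ := by
      funext x; simp [hψ, Equiv.Perm.mul_apply]
    rwa [hfun] at h2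
  -- ψ is strictly monotone
  have hmono : StrictMono ψ := by
    intro i j hij
    rcases lt_trichotomy (ψ i) (ψ j) with h | h | h
    · exact h
    · exact absurd (ψ.injective h) hij.ne
    · exfalso
      by_cases hi : i = 0
      · rw [hi, hψ0] at h
        exact (Fin.not_lt_zero _) h
      · have h0i : (0 : Fin (n+1)) < i := Fin.pos_of_ne_zero hi
        have hψj0 : ψ j ≠ 0 := by
          intro e
          have hj0 : j = 0 := ψ.injective (e.trans hψ0.symm)
          rw [hj0] at hij
          exact Fin.not_lt_zero i hij
        have h0ψj : (0 : Fin (n+1)) < ψ j := Fin.pos_of_ne_zero hψj0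
        have s1 : sbtw (c (ψ 0)) (c (ψ i)) (c (ψ j)) := hψcyc 0 i j h0i hij
        rw [hψ0] at s1
        have s2 : sbtw (c 0) (c (ψ j)) (c (ψ i)) := hc 0 (ψ j) (ψ i) h0ψj h
        exact sbtw_asymm s1 (sbtw_cyclic_left s2)
  have hψ1 : ψ = 1 := by
    apply Equiv.ext
    intro x
    have h3 := Fin.coe_orderIso_apply (StrictMono.orderIsoOfSurjective ψ hmono ψ.surjective) x
    rw [StrictMono.coe_orderIsoOfSurjective] at h3
    exact Fin.ext h3
  rw [hψ] at hψ1
  have hπeq : π = ((finRotate (n+1)) ^ t)⁻¹ := mul_eq_one_iff_eq_inv.mp hψ1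
  rw [hπeq, map_inv, map_pow, sign_finRotate, Nat.add_sub_cancel, hn.neg_one_pow]
  simp

lemma cycSgn_eq_sign {n : ℕ} (hn : Even n) {c : Fin (n+1) → S1}
    (hc : InCyclicOrder c) (π : Equiv.Perm (Fin (n+1))) :
    cycSgn (c ∘ π) = (Equiv.Perm.sign π : ℤ) := by
  have h : ∃ σ : Equiv.Perm (Fin (n+1)), InCyclicOrder ((c ∘ π) ∘ σ) := by
    refine ⟨π⁻¹, ?_⟩
    have : (c ∘ ⇑π) ∘ ⇑π⁻¹ = c := by
      funext x; simp
    rwa [this]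
  rw [cycSgn, dif_pos h]
  have hspec : InCyclicOrder ((c ∘ ⇑π) ∘ ⇑(h.choose)) := h.choose_spec
  have hcomp : (c ∘ ⇑π) ∘ ⇑(h.choose) = c ∘ ⇑(π * h.choose) := by
    funext x; simp [Equiv.Perm.mul_apply]
  rw [hcomp] at hspec
  have h1 : Equiv.Perm.sign (π * h.choose) = 1 := sign_eq_one_of_cyclic hn hc _ hspec
  rw [map_mul] at h1
  have h2 : Equiv.Perm.sign h.choose = (Equiv.Perm.sign π)⁻¹ := by
    first
    | exact mul_eq_one_iff_eq_inv.mp h1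
    | exact mul_eq_one_iff_eq_inv.mp (by rw [mul_comm] at h1; exact h1)
    | exact inv_eq_of_mul_eq_one_right h1
    | exact inv_eq_of_mul_eq_one_left h1
  rw [h2]
  norm_num [Int.units_inv_eq_self]

lemma InCyclicOrder.face {n : ℕ} {c : Fin (n+1) → S1} (hc : InCyclicOrder c) (i : Fin (n+1)) :
    InCyclicOrder (c ∘ i.succAbove) := by
  intro x y z hxy hyz
  exact hc _ _ _ (Fin.succAbove_lt_succAbove_iff.mpr hxy) (Fin.succAbove_lt_succAbove_iff.mpr hyz)

lemma exists_rho {n : ℕ} (π : Equiv.Perm (Fin (n+1))) (i : Fin (n+1)) :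
    ∃ ρ : Equiv.Perm (Fin n), (∀ j, π (i.succAbove j) = (π i).succAbove (ρ j)) ∧
      Equiv.Perm.sign ρ = (-1)^(i:ℕ) * (-1)^((π i : Fin (n+1)) : ℕ) * Equiv.Perm.sign π := by
  set μ : Equiv.Perm (Fin (n+1)) := (π i).cycleRange * π * (i.cycleRange)⁻¹ with hμ
  have hμ0 : μ 0 = 0 := by
    rw [hμ]
    simp only [Equiv.Perm.mul_apply]
    rw [show ((i.cycleRange)⁻¹ : Equiv.Perm (Fin (n+1))) 0 = i from Fin.cycleRange_symm_zero i]
    rw [Fin.cycleRange_self]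
  set pr := Equiv.Perm.decomposeFin μ with hpr
  have hback : Equiv.Perm.decomposeFin.symm (pr.1, pr.2) = μ := by
    rw [hpr]; exact Equiv.symm_apply_apply _ _
  have hp1 : pr.1 = 0 := by
    rw [← hμ0, ← hback, Equiv.Perm.decomposeFin_symm_apply_zero]
  refine ⟨pr.2, ?_, ?_⟩
  · intro j
    have h1 : μ j.succ = (pr.2 j).succ := by
      rw [← hback, Equiv.Perm.decomposeFin_symm_apply_succ, hp1]
      simp
    have h2 : (π i).cycleRange (π (i.succAbove j)) = (pr.2 j).succ := by
      rw [← h1, hμ]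
      simp only [Equiv.Perm.mul_apply]
      rw [show (i.cycleRange⁻¹ : Equiv.Perm (Fin (n+1))) j.succ = i.succAbove j from
        Fin.cycleRange_symm_succ i j]
    have h3 : (π i).cycleRange ((π i).succAbove (pr.2 j)) = (pr.2 j).succ :=
      Fin.cycleRange_succAbove _ _
    exact ((π i).cycleRange).injective (h2.trans h3.symm)
  · have hs1 : Equiv.Perm.sign μ = Equiv.Perm.sign pr.2 := by
      rw [← hback, Equiv.Perm.decomposeFin.symm_sign, hp1, if_pos rfl, one_mul]
    have hs2 : Equiv.Perm.sign μ
        = (-1)^((π i : Fin (n+1)) : ℕ) * Equiv.Perm.sign π * (-1)^(i:ℕ) := by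
      rw [hμ, map_mul, map_mul, map_inv, Fin.sign_cycleRange, Fin.sign_cycleRange,
        Int.units_inv_eq_self]
    rw [← hs1, hs2, mul_comm ((-1:ℤˣ) ^ ((π i : Fin (n+1)) : ℕ) * Equiv.Perm.sign π) ((-1:ℤˣ)^(i:ℕ)), mul_assoc]

lemma cocycle {m : ℕ} (hm : Even m) (b : Fin (m+2) → S1) (hb : Function.Injective b) :
    ∑ i : Fin (m+2), (-1:ℚ)^(i:ℕ) * (cycSgn (b ∘ i.succAbove) : ℚ) = 0 := by
  obtain ⟨σ, hσ⟩ := exists_inCyclicOrder b hb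
  set c : Fin (m+2) → S1 := b ∘ σ with hc
  set π : Equiv.Perm (Fin (m+2)) := σ⁻¹ with hπ
  have hbc : b = c ∘ π := by
    funext x; simp [hc, hπ]
  have hccyc : InCyclicOrder c := hσ
  have key : ∀ i : Fin (m+2), (cycSgn (b ∘ i.succAbove) : ℚ)
      = (-1:ℚ)^(i:ℕ) * (-1:ℚ)^((π i : Fin (m+2)) : ℕ) * ((Equiv.Perm.sign π : ℤ) : ℚ) := by
    intro i
    obtain ⟨ρ, hρ, hsign⟩ := exists_rho π i
    have hface : b ∘ i.succAbove = (c ∘ (π i).succAbove) ∘ ρ := by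
      funext j
      simp only [Function.comp_apply, hbc]
      rw [hρ j]
    rw [hface, cycSgn_eq_sign hm (hccyc.face (π i)) ρ, hsign]
    push_cast
    ring
  rw [Finset.sum_congr rfl (fun i _ => by rw [key i])]
  have hterm : ∀ i : Fin (m+2), (-1:ℚ)^(i:ℕ) *
      ((-1:ℚ)^(i:ℕ) * (-1:ℚ)^((π i : Fin (m+2)) : ℕ) * ((Equiv.Perm.sign π : ℤ) : ℚ))
      = ((Equiv.Perm.sign π : ℤ) : ℚ) * (-1:ℚ)^((π i : Fin (m+2)) : ℕ) := by
    intro i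
    have : (-1:ℚ)^(i:ℕ) * (-1:ℚ)^(i:ℕ) = 1 := by
      rw [← pow_add, Even.neg_one_pow ⟨(i:ℕ), rfl⟩]
    calc (-1:ℚ)^(i:ℕ) * ((-1:ℚ)^(i:ℕ) * (-1:ℚ)^((π i : Fin (m+2)) : ℕ)
          * ((Equiv.Perm.sign π : ℤ) : ℚ))
        = ((-1:ℚ)^(i:ℕ) * (-1:ℚ)^(i:ℕ)) * ((-1:ℚ)^((π i : Fin (m+2)) : ℕ)
          * ((Equiv.Perm.sign π : ℤ) : ℚ)) := by ring
      _ = ((Equiv.Perm.sign π : ℤ) : ℚ) * (-1:ℚ)^((π i : Fin (m+2)) : ℕ) := by rw [this]; ring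
  rw [Finset.sum_congr rfl (fun i _ => hterm i), ← Finset.mul_sum]
  have hzero : ∑ i : Fin (m+2), (-1:ℚ)^((π i : Fin (m+2)) : ℕ) = 0 := by
    rw [Equiv.sum_comp π (fun j : Fin (m+2) => (-1:ℚ)^(j:ℕ))]
    rw [Fin.sum_univ_eq_sum_range (fun j => (-1:ℚ)^j) (m+2)]
    rw [neg_one_geom_sum, if_pos (by obtain ⟨r, hr⟩ := hm; exact ⟨r+1, by omega⟩)]
  rw [hzero, mul_zero]

lemma sum_split {n : ℕ} (A : Fin (n+1) → Finset S1) (i : Fin (n+1)) (f : (Fin n → S1) → ℚ) :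
    ∑ b ∈ Fintype.piFinset A, f (b ∘ i.succAbove)
      = ((A i).card : ℚ) * ∑ a ∈ Fintype.piFinset (fun j => A (i.succAbove j)), f a := by
  have h : ∑ b ∈ Fintype.piFinset A, f (b ∘ i.succAbove)
      = ∑ p ∈ (A i) ×ˢ Fintype.piFinset (fun j => A (i.succAbove j)), f p.2 := by
    apply Finset.sum_bij' (fun b _ => ((b i, b ∘ i.succAbove) : S1 × (Fin n → S1)))
      (fun p _ => i.insertNth p.1 p.2)
    · intro b hb
      rw [Fintype.mem_piFinset] at hb
      rw [Finset.mem_product]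
      exact ⟨hb i, Fintype.mem_piFinset.mpr fun j => hb _⟩
    · intro p hp
      rw [Finset.mem_product] at hp
      rw [Fintype.mem_piFinset]
      intro j
      by_cases hj : j = i
      · rw [hj, Fin.insertNth_apply_same]; exact hp.1
      · obtain ⟨j', rfl⟩ := Fin.exists_succAbove_eq hj
        rw [Fin.insertNth_apply_succAbove]; exact Fintype.mem_piFinset.mp hp.2 j'
    · intro b hb
      rw [Fin.insertNth_eq_iff]
      exact ⟨rfl, rfl⟩
    · intro p hp
      ext
      · simp [Fin.insertNth_apply_same]
      · simp [Fin.insertNth_comp_succAbove]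
    · intro b hb
      simp
  rw [h, Finset.sum_product]
  simp only []
  rw [Finset.sum_const, nsmul_eq_mul]

/-- The averaged sign is a simplicial cocycle: the alternating sum of `sign_{2k}`
over the `2k+2` faces of a tuple of pairwise disjoint nonempty finite subsets of the
circle vanishes. -/
theorem stmt5 (k : ℕ) (hk : 1 ≤ k) (A : Fin (2 * k + 2) → Finset S1)
    (hne : ∀ i, (A i).Nonempty)
    (hdisj : ∀ i j, i ≠ j → Disjoint (A i) (A j)) :
    ∑ i : Fin (2 * k + 2), (-1 : ℚ) ^ (i : ℕ) * avgSign (A ∘ i.succAbove) = 0 := by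
  have hinj : ∀ b ∈ Fintype.piFinset A, Function.Injective b := by
    intro b hb x y hxy
    by_contra hne'
    have h1 : b x ∈ A x := Fintype.mem_piFinset.mp hb x
    have h2 : b x ∈ A y := hxy ▸ Fintype.mem_piFinset.mp hb y
    exact Finset.disjoint_left.mp (hdisj x y hne') h1 h2
  have hcard : ∀ j, ((A j).card : ℚ) ≠ 0 := by
    intro j
    exact_mod_cast (hne j).card_pos.ne'
  have step : ∀ i : Fin (2*k+2), avgSign (A ∘ i.succAbove)
      = (∏ j : Fin (2*k+2), ((A j).card : ℚ))⁻¹ *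
        ∑ b ∈ Fintype.piFinset A, (cycSgn (b ∘ i.succAbove) : ℚ) := by
    intro i
    have hsplit := sum_split A i (fun a => (cycSgn a : ℚ))
    rw [avgSign]
    simp only [Function.comp_def] at hsplit ⊢
    rw [hsplit, Fin.prod_univ_succAbove (fun j => ((A j).card : ℚ)) i]
    rw [mul_inv]
    have hprodne : (∏ j : Fin (2*k+1), ((A (i.succAbove j)).card : ℚ)) ≠ 0 :=
      Finset.prod_ne_zero_iff.mpr fun j _ => hcard _
    field_simp [hcard i]
  rw [Finset.sum_congr rfl (fun i _ => by rw [step i])]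
  have hswap : ∑ i : Fin (2*k+2), (-1:ℚ)^(i:ℕ) *
      ((∏ j : Fin (2*k+2), ((A j).card : ℚ))⁻¹ *
        ∑ b ∈ Fintype.piFinset A, (cycSgn (b ∘ i.succAbove) : ℚ))
      = (∏ j : Fin (2*k+2), ((A j).card : ℚ))⁻¹ *
        ∑ b ∈ Fintype.piFinset A,
          ∑ i : Fin (2*k+2), (-1:ℚ)^(i:ℕ) * (cycSgn (b ∘ i.succAbove) : ℚ) := by
    rw [Finset.mul_sum]
    rw [show ∑ b ∈ Fintype.piFinset A, (∏ j : Fin (2*k+2), ((A j).card : ℚ))⁻¹ *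
        ∑ i : Fin (2*k+2), (-1:ℚ)^(i:ℕ) * (cycSgn (b ∘ i.succAbove) : ℚ)
      = ∑ b ∈ Fintype.piFinset A, ∑ i : Fin (2*k+2),
          (∏ j : Fin (2*k+2), ((A j).card : ℚ))⁻¹ * ((-1:ℚ)^(i:ℕ) * (cycSgn (b ∘ i.succAbove) : ℚ))
      from Finset.sum_congr rfl fun b _ => Finset.mul_sum _ _ _]
    rw [Finset.sum_comm]
    apply Finset.sum_congr rfl
    intro i _
    simp only [Finset.mul_sum]
    apply Finset.sum_congr rfl
    intro b _
    ring
  rw [hswap]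
  have hzero : ∀ b ∈ Fintype.piFinset A,
      ∑ i : Fin (2*k+2), (-1:ℚ)^(i:ℕ) * (cycSgn (b ∘ i.succAbove) : ℚ) = 0 := by
    intro b hb
    exact cocycle (m := 2*k) ⟨k, by ring⟩ b (hinj b hb)
  rw [Finset.sum_congr rfl hzero, Finset.sum_const, smul_zero, mul_zero]
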